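/- Let $N = 2r+1$ be odd, let $n \geq 1$ with $n^* := n/\gcd(n,2)$ odd, and let $\mathfrak{p}$ be a partition of $2r$. Define $\mathfrak{q} = \left(\left(d^{(n^*)}_{\mathrm{com},A}(\mathfrak{p})\right)^+\right)_B$, i.e. apply the split map $d^{(n^*)}_{\mathrm{com},A}$, add $1$ to the largest part, then take the $B$-collapse. Then $\mathfrak{q}$ is a partition of $N$ in which every even part occurs with even multiplicity. -/

import Mathlib

/-- The multiset of parts of the partition `𝔰(m;n) = (n^{⌊m/n⌋}, m mod n)`,
with the remainder omitted when it is `0`. -/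
def sPart (n m : ℕ) : Multiset ℕ :=
  Multiset.replicate (m / n) n + (if m % n = 0 then 0 else {m % n})

/-- `d^{(n)}_{com,A}(𝔭)`: the multiset union of `𝔰(pᵢ;n)` over the parts `pᵢ` of `𝔭`. -/
def dcomA (n : ℕ) (p : Multiset ℕ) : Multiset ℕ :=
  p.bind (sPart n)

/-- The operation `(⋆)`: in a sequence read as consecutive pairs, every strictly decreasing
pair `(a, b)` with `a > b` is replaced by `(a - 1, b + 1)`; all other entries are unchanged. -/
def starOp : List ℕ → List ℕ
  | a :: b :: rest => if b < a then (a - 1) :: (b + 1) :: starOp rest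
                      else a :: b :: starOp rest
  | l => l

/-- The parts of a multiset listed in non-increasing order. -/
def descSort (s : Multiset ℕ) : List ℕ :=
  (Multiset.sort s (· ≤ ·)).reverse

/-- The even parts of `𝔭`, listed decreasingly, with a `0` appended if needed to make the
number of entries even. -/
def evenSeq (p : Multiset ℕ) : List ℕ :=
  let l := descSort (p.filter (fun x => x % 2 = 0))
  if l.length % 2 = 0 then l else l ++ [0]

/-- The `B`-collapse algorithm: apply `(⋆)` to the (zero-padded) decreasing sequence of even
parts of `𝔭`, recombine with the odd parts, and discard zeros. -/
def bCollapse (p : Multiset ℕ) : Multiset ℕ :=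
  ((starOp (evenSeq p) : List ℕ) : Multiset ℕ).filter (fun x => 0 < x)
    + p.filter (fun x => x % 2 = 1)

/-- The largest part of a multiset (or `0` if it is empty). -/
def maxPart (s : Multiset ℕ) : ℕ := s.fold max 0

/-- `𝔭⁺`: the partition obtained from `𝔭` by adding `1` to its largest part. -/
def mPlus (s : Multiset ℕ) : Multiset ℕ :=
  (maxPart s + 1) ::ₘ s.erase (maxPart s)

lemma starOp_sum : ∀ l : List ℕ, (starOp l).sum = l.sum
  | [] => rfl
  | [a] => rfl
  | a :: b :: rest => by
    unfold starOp
    split <;> simp [starOp_sum rest] <;> omega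

lemma starOp_count_even : ∀ l : List ℕ, l.length % 2 = 0 →
    List.Pairwise (· ≥ ·) l → (∀ a ∈ l, a % 2 = 0) →
    ∀ x, x % 2 = 0 → (starOp l).count x % 2 = 0
  | [], _, _, _, x, _ => by simp [starOp]
  | [a], h, _, _, _, _ => by simp at h
  | a :: b :: rest, hlen, hs, hev, x, hx => by
    have hrest : (starOp rest).count x % 2 = 0 :=
      starOp_count_even rest (by simp at hlen; omega) (hs.of_cons.of_cons)
        (fun c hc => hev c (by simp [hc])) x hx
    have hba : b ≤ a := (List.pairwise_cons.1 hs).1 b (by simp)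
    have ha2 : a % 2 = 0 := hev a (by simp)
    have hb2 : b % 2 = 0 := hev b (by simp)
    unfold starOp
    split
    · have h1 : x ≠ a - 1 := by omega
      have h2 : x ≠ b + 1 := by omega
      simp [List.count_cons, h1, h2, h1.symm, h2.symm, hrest]
    · have hab : a = b := by omega
      simp only [List.count_cons]
      rcases eq_or_ne a x with h | h <;> rcases eq_or_ne b x with h' | h' <;>
        simp_all <;> omega

lemma evenSeq_sorted (p : Multiset ℕ) : List.Pairwise (· ≥ ·) (evenSeq p) := by
  have h : List.Pairwise (· ≥ ·) (descSort (p.filter (fun x => x % 2 = 0))) := by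
    unfold descSort
    rw [List.pairwise_reverse]
    exact Multiset.pairwise_sort _ (· ≤ ·)
  simp only [evenSeq]
  split
  · exact h
  · rw [List.pairwise_append]
    refine ⟨h, by simp, by simp⟩

lemma evenSeq_even (p : Multiset ℕ) : ∀ a ∈ evenSeq p, a % 2 = 0 := by
  intro a ha
  simp only [evenSeq] at ha
  split at ha
  · simp only [descSort, List.mem_reverse, Multiset.mem_sort, Multiset.mem_filter] at ha
    exact ha.2
  · rcases List.mem_append.1 ha with h | h
    · simp only [descSort, List.mem_reverse, Multiset.mem_sort, Multiset.mem_filter] at h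
      exact h.2
    · simp at h; omega

lemma evenSeq_len (p : Multiset ℕ) : (evenSeq p).length % 2 = 0 := by
  simp only [evenSeq]
  split <;> simp_all <;> omega

lemma evenSeq_sum (p : Multiset ℕ) :
    (evenSeq p).sum = (p.filter (fun x => x % 2 = 0)).sum := by
  have h : (descSort (p.filter (fun x => x % 2 = 0))).sum
      = (p.filter (fun x => x % 2 = 0)).sum := by
    unfold descSort
    rw [List.sum_reverse, ← Multiset.sum_coe (Multiset.sort _ (· ≤ ·)), Multiset.sort_eq]
  simp only [evenSeq]
  split <;> simp [h]

lemma bCollapse_sum (p : Multiset ℕ) : (bCollapse p).sum = p.sum := by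
  unfold bCollapse
  have h1 : ((starOp (evenSeq p) : Multiset ℕ).filter (fun x => 0 < x)).sum
      = (starOp (evenSeq p)).sum := by
    conv_rhs => rw [← Multiset.sum_coe,
      ← Multiset.filter_add_not (fun x => 0 < x) (starOp (evenSeq p) : Multiset ℕ)]
    rw [Multiset.sum_add]
    have : ((starOp (evenSeq p) : Multiset ℕ).filter (fun x => ¬ 0 < x)).sum = 0 :=
      Multiset.sum_eq_zero (fun x hx => by
        have := (Multiset.mem_filter.1 hx).2; omega)
    omega
  rw [Multiset.sum_add, h1, starOp_sum, evenSeq_sum]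
  conv_rhs => rw [← Multiset.filter_add_not (fun x => x % 2 = 0) p]
  rw [Multiset.sum_add]
  congr 2
  exact Multiset.filter_congr (fun x _ => by omega)

lemma bCollapse_pos (p : Multiset ℕ) : ∀ x ∈ bCollapse p, 0 < x := by
  intro x hx
  unfold bCollapse at hx
  rcases Multiset.mem_add.1 hx with h | h
  · exact (Multiset.mem_filter.1 h).2
  · have := (Multiset.mem_filter.1 h).2; omega

lemma bCollapse_count (p : Multiset ℕ) :
    ∀ x, Even x → Even ((bCollapse p).count x) := by
  intro x hx
  rw [Nat.even_iff] at hx ⊢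
  unfold bCollapse
  rw [Multiset.count_add]
  have h2 : (p.filter (fun x => x % 2 = 1)).count x = 0 := by
    rw [Multiset.count_eq_zero]
    intro h
    have := (Multiset.mem_filter.1 h).2; omega
  have h1 : ((starOp (evenSeq p) : Multiset ℕ).filter (fun x => 0 < x)).count x
      ≤ (starOp (evenSeq p) : Multiset ℕ).count x := Multiset.count_le_of_le x
    (Multiset.filter_le _ _)
  have h1' : ((starOp (evenSeq p) : Multiset ℕ).filter (fun y => 0 < y)).count x
      = if 0 < x then (starOp (evenSeq p) : Multiset ℕ).count x else 0 :=
    Multiset.count_filter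
  have hc : (starOp (evenSeq p) : Multiset ℕ).count x % 2 = 0 := by
    rw [Multiset.coe_count]
    exact starOp_count_even _ (evenSeq_len p) (evenSeq_sorted p) (evenSeq_even p) x hx
  rw [h1', h2]
  split <;> omega

lemma maxPart_mem (s : Multiset ℕ) (hs : s ≠ 0) : maxPart s ∈ s := by
  induction s using Multiset.induction with
  | empty => simp at hs
  | cons a t ih =>
    unfold maxPart at *
    rw [Multiset.fold_cons_left]
    rcases max_cases a (t.fold max 0) with ⟨h, _⟩ | ⟨h, _⟩
    · rw [h]; simp
    · rw [h]
      rcases eq_or_ne t 0 with rfl | ht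
      · simp at h ⊢; omega
      · exact Multiset.mem_cons_of_mem (ih ht)

lemma mPlus_sum (s : Multiset ℕ) : (mPlus s).sum = s.sum + 1 := by
  unfold mPlus
  rcases eq_or_ne s 0 with rfl | hs
  · simp [maxPart]
  · rw [Multiset.sum_cons]
    have := Multiset.cons_erase (maxPart_mem s hs)
    have hsum : s.sum = maxPart s + (s.erase (maxPart s)).sum := by
      conv_lhs => rw [← this]
      rw [Multiset.sum_cons]
    omega

lemma dcomA_sum (n : ℕ) (p : Multiset ℕ) : (dcomA n p).sum = p.sum := by
  unfold dcomA
  induction p using Multiset.induction with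
  | empty => simp
  | cons a t ih =>
    rw [Multiset.cons_bind, Multiset.sum_add, ih, Multiset.sum_cons]
    congr 1
    unfold sPart
    rw [Multiset.sum_add, Multiset.sum_replicate, smul_eq_mul]
    rcases eq_or_ne (a % n) 0 with h | h
    · simp only [h, if_pos rfl, Multiset.sum_zero, Nat.add_zero]
      exact Nat.div_mul_cancel (Nat.dvd_of_mod_eq_zero h)
    · rw [if_neg h]
      simpa using Nat.div_add_mod' a n


/-- Let `N = 2r+1` be odd, `n ≥ 1` with `n* = n / gcd(n,2)` odd, and let `𝔭` be a partition of
`2r`.  Then `𝔮 = ((d^{(n*)}_{com,A}(𝔭))⁺)_B` — split, add `1` to the largest part, then take the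
`B`-collapse — is a partition of `N` in which every even part occurs with even multiplicity. -/
theorem stmt19 (r n : ℕ) (hn : 1 ≤ n) (hodd : Odd (n / Nat.gcd n 2))
    (p : Multiset ℕ) (hpos : ∀ x ∈ p, 0 < x) (hsum : p.sum = 2 * r) :
    (bCollapse (mPlus (dcomA (n / Nat.gcd n 2) p))).sum = 2 * r + 1 ∧
    (∀ x ∈ bCollapse (mPlus (dcomA (n / Nat.gcd n 2) p)), 0 < x) ∧
    (∀ x ∈ bCollapse (mPlus (dcomA (n / Nat.gcd n 2) p)), Even x →
      Even ((bCollapse (mPlus (dcomA (n / Nat.gcd n 2) p))).count x)) := by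
  refine ⟨?_, bCollapse_pos _, fun x _ hx => bCollapse_count _ x hx⟩
  rw [bCollapse_sum, mPlus_sum, dcomA_sum, hsum]
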